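/- Let d ≥ 1, γ, M ∈ SL₂(ℤ) and τ, ζ ∈ H. Then j₂(U₂([[0,d],[d,0]]) γ^↑ M^↓, diag(τ,ζ)) = (1 − (γτ)·d²(Mζ)) · j(γ,τ) · j(M,ζ). -/

import Mathlib

open Matrix

noncomputable def stmt17up (g : Matrix.SpecialLinearGroup (Fin 2) ℤ) :
    Matrix (Fin 4) (Fin 4) ℂ :=
  !![(g 0 0 : ℂ), 0, (g 0 1 : ℂ), 0; 0, 1, 0, 0;
     (g 1 0 : ℂ), 0, (g 1 1 : ℂ), 0; 0, 0, 0, 1]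

noncomputable def stmt17down (h : Matrix.SpecialLinearGroup (Fin 2) ℤ) :
    Matrix (Fin 4) (Fin 4) ℂ :=
  !![1, 0, 0, 0; 0, (h 0 0 : ℂ), 0, (h 0 1 : ℂ);
     0, 0, 1, 0; 0, (h 1 0 : ℂ), 0, (h 1 1 : ℂ)]

noncomputable def stmt17U2 (d : ℕ) : Matrix (Fin 4) (Fin 4) ℂ :=
  !![1, 0, 0, 0; 0, 1, 0, 0; 0, (d : ℂ), 1, 0; (d : ℂ), 0, 0, 1]

noncomputable def stmt17j2 (P : Matrix (Fin 4) (Fin 4) ℂ)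
    (Z : Matrix (Fin 2) (Fin 2) ℂ) : ℂ :=
  (!![P 2 0, P 2 1; P 3 0, P 3 1] * Z + !![P 2 2, P 2 3; P 3 2, P 3 3]).det

noncomputable def stmt17mobius (g : Matrix.SpecialLinearGroup (Fin 2) ℤ) (τ : ℂ) : ℂ :=
  ((g 0 0 : ℂ) * τ + (g 0 1 : ℂ)) / ((g 1 0 : ℂ) * τ + (g 1 1 : ℂ))

lemma key (g : Matrix.SpecialLinearGroup (Fin 2) ℤ) (z : UpperHalfPlane) :
    (g 1 0 : ℂ) * (z : ℂ) + (g 1 1 : ℂ) ≠ 0 := by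
  have h := UpperHalfPlane.linear_ne_zero (cd := ![(g 1 0 : ℝ), (g 1 1 : ℝ)]) z ?_
  · simpa using h
  · intro h0
    have h1 : ((g 1 0 : ℤ) : ℝ) = 0 := by simpa using congr_fun h0 0
    have h2 : ((g 1 1 : ℤ) : ℝ) = 0 := by simpa using congr_fun h0 1
    have hd := g.det_coe
    rw [Matrix.det_fin_two] at hd
    have h1' : g 1 0 = 0 := by exact_mod_cast h1
    have h2' : g 1 1 = 0 := by exact_mod_cast h2
    simp [h1', h2'] at hd

set_option maxHeartbeats 1600000 in
/-- For `d ≥ 1`, `γ, M ∈ SL₂(ℤ)` and `τ, ζ ∈ H`: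
`j₂(U₂([[0,d],[d,0]]) γ^↑ M^↓, diag(τ,ζ)) = (1 − (γτ)·d²(Mζ)) · j(γ,τ) · j(M,ζ)`. -/
theorem stmt17 (d : ℕ) (hd : 1 ≤ d) (γ M : Matrix.SpecialLinearGroup (Fin 2) ℤ)
    (τ ζ : UpperHalfPlane) :
    stmt17j2 (stmt17U2 d * stmt17up γ * stmt17down M) !![(τ : ℂ), 0; 0, (ζ : ℂ)] =
      (1 - stmt17mobius γ (τ : ℂ) * (d : ℂ) ^ 2 * stmt17mobius M (ζ : ℂ)) *
        ((γ 1 0 : ℂ) * (τ : ℂ) + (γ 1 1 : ℂ)) *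
        ((M 1 0 : ℂ) * (ζ : ℂ) + (M 1 1 : ℂ)) := by
  have h1 := key γ τ
  have h2 := key M ζ
  set P := stmt17U2 d * stmt17up γ * stmt17down M with hP
  have e : ∀ i j, P i j = !![(γ 0 0 : ℂ), 0, (γ 0 1 : ℂ), 0;
      0, (M 0 0 : ℂ), 0, (M 0 1 : ℂ);
      (γ 1 0 : ℂ), (d : ℂ) * (M 0 0 : ℂ), (γ 1 1 : ℂ), (d : ℂ) * (M 0 1 : ℂ);
      (d : ℂ) * (γ 0 0 : ℂ), (M 1 0 : ℂ), (d : ℂ) * (γ 0 1 : ℂ), (M 1 1 : ℂ)] i j := by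
    intro i j
    fin_cases i <;> fin_cases j <;>
      simp [hP, stmt17U2, stmt17up, stmt17down, Matrix.mul_apply, Fin.sum_univ_four]
  rw [stmt17j2, e 2 0, e 2 1, e 3 0, e 3 1, e 2 2, e 2 3, e 3 2, e 3 3]
  simp only [stmt17mobius, Matrix.det_fin_two, Matrix.mul_apply, Fin.sum_univ_two,
    Matrix.cons_val', Matrix.cons_val_zero, Matrix.cons_val_one, Matrix.head_cons,
    Matrix.empty_val', Matrix.cons_val_fin_one, Matrix.head_fin_const, Matrix.add_apply, Matrix.of_apply, Matrix.cons_val]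
  field_simp
  ring
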